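/- (Section 3.2: choosing α outside the images of the sign sets of q.) Suppose the standing assumptions hold. Suppose α ∈ ℝ satisfies min U < α < max U on [−L/2, L/2], α ∉ {U(y) : y ∈ [−L/2, L/2], q(y) > 0} ∪ {U(y) : y ∈ [−L/2, L/2], q(y) < 0}, and U′(y) ≠ 0 at every y ∈ [−L/2, L/2] with U(y) = α. Then every y ∈ [−L/2, L/2] with U(y) = α satisfies q(y) = 0, and a continuous reciprocal Rossby Mach number profile m for α exists; moreover at each point y with U(y) = α one has m(y) = q′(y)/(κ₀² U′(y)) ≠ 0. -/

import Mathlib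

open Set

noncomputable section

/-- Section 3.2: if `α` lies in the open range of `U`, avoids the images under `U` of the
sign sets of `q`, and `U' ≠ 0` at every node of `U − α`, then every node of `U − α` is a
critical latitude, and a continuous reciprocal Rossby Mach number profile `m` for `α`
exists, with `m = q'/(κ₀² U') ≠ 0` at each node. -/
theorem class_two_alpha_choice
    (L Ld : ℝ) (hL : 0 < L) (hLd : 0 < Ld)
    (U q U' q' : ℝ → ℝ)
    (hU' : ∀ y ∈ Icc (-L/2) (L/2), HasDerivAt U (U' y) y)
    (hU'c : ContinuousOn U' (Icc (-L/2) (L/2)))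
    (hq' : ∀ y ∈ Icc (-L/2) (L/2), HasDerivAt q (q' y) y)
    (hq'c : ContinuousOn q' (Icc (-L/2) (L/2)))
    -- standing assumptions
    (hqpos : ∃ y ∈ Ioo (-L/2) (L/2), 0 < q y)
    (hqneg : ∃ y ∈ Ioo (-L/2) (L/2), q y < 0)
    (hsimple : ∀ y ∈ Icc (-L/2) (L/2), q y = 0 → q' y ≠ 0)
    -- the choice of α
    (α : ℝ)
    (hrange : (∃ y ∈ Icc (-L/2) (L/2), U y < α) ∧ (∃ y ∈ Icc (-L/2) (L/2), α < U y))
    (havoid_pos : ∀ y ∈ Icc (-L/2) (L/2), 0 < q y → U y ≠ α)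
    (havoid_neg : ∀ y ∈ Icc (-L/2) (L/2), q y < 0 → U y ≠ α)
    (hUnode : ∀ y ∈ Icc (-L/2) (L/2), U y = α → U' y ≠ 0) :
    (∀ y ∈ Icc (-L/2) (L/2), U y = α → q y = 0) ∧
    ∃ m : ℝ → ℝ,
      ContinuousOn m (Icc (-L/2) (L/2)) ∧
      (∀ y ∈ Icc (-L/2) (L/2), (Real.pi^2/L^2 + 1/Ld^2) * m y * (U y - α) = q y) ∧
      (∀ y ∈ Icc (-L/2) (L/2), U y = α →
        m y = q' y / ((Real.pi^2/L^2 + 1/Ld^2) * U' y) ∧ m y ≠ 0) := by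

  set κ := Real.pi^2/L^2 + 1/Ld^2 with hκdef
  have hκ : 0 < κ := by positivity
  have hnode : ∀ y ∈ Icc (-L/2) (L/2), U y = α → q y = 0 := by
    intro y hy hUy
    rcases lt_trichotomy (q y) 0 with h|h|h
    · exact absurd hUy (havoid_neg y hy h)
    · exact h
    · exact absurd hUy (havoid_pos y hy h)
  refine ⟨hnode, ?_⟩
  classical
  set m : ℝ → ℝ := fun y => if U y = α then q' y / (κ * U' y)
      else q y / (κ * (U y - α)) with hm
  refine ⟨m, ?_, ?_, ?_⟩
  · intro y₀ hy₀
    by_cases h : U y₀ = α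
    · have hq0 : q y₀ = 0 := hnode y₀ hy₀ h
      have hU'0 : U' y₀ ≠ 0 := hUnode y₀ hy₀ h
      have hsU : Filter.Tendsto (slope U y₀) (nhdsWithin y₀ {y₀}ᶜ) (nhds (U' y₀)) :=
        hasDerivAt_iff_tendsto_slope.mp (hU' y₀ hy₀)
      have hsq : Filter.Tendsto (slope q y₀) (nhdsWithin y₀ {y₀}ᶜ) (nhds (q' y₀)) :=
        hasDerivAt_iff_tendsto_slope.mp (hq' y₀ hy₀)
      have hden : κ * U' y₀ ≠ 0 := mul_ne_zero hκ.ne' hU'0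
      have hlim : Filter.Tendsto (fun y => slope q y₀ y / (κ * slope U y₀ y))
          (nhdsWithin y₀ {y₀}ᶜ) (nhds (q' y₀ / (κ * U' y₀))) :=
        hsq.div (Filter.Tendsto.const_mul κ hsU) hden
      have hev : ∀ᶠ y in nhdsWithin y₀ {y₀}ᶜ,
          m y = slope q y₀ y / (κ * slope U y₀ y) := by
        have h1 : ∀ᶠ y in nhdsWithin y₀ {y₀}ᶜ, slope U y₀ y ≠ 0 :=
          hsU.eventually_ne hU'0
        filter_upwards [h1, self_mem_nhdsWithin] with y hy hy'
        have hyne : y ≠ y₀ := hy'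
        have hsub : y - y₀ ≠ 0 := sub_ne_zero.mpr hyne
        have hUy : U y ≠ α := by
          intro hc
          apply hy
          rw [slope_def_field, h, hc, sub_self]
          simp
        have hmv : m y = q y / (κ * (U y - α)) := if_neg hUy
        rw [hmv, slope_def_field, slope_def_field, hq0, h]
        have hUa : U y - α ≠ 0 := sub_ne_zero.mpr hUy
        field_simp
        ring
      have hlim2 : Filter.Tendsto m (nhdsWithin y₀ {y₀}ᶜ)
          (nhds (q' y₀ / (κ * U' y₀))) := hlim.congr' (hev.mono fun y hy => hy.symm)
      have hmv : m y₀ = q' y₀ / (κ * U' y₀) := if_pos h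
      have hca : Filter.Tendsto m (nhds y₀) (nhds (m y₀)) := by
        rw [← nhdsNE_sup_pure y₀]
        rw [hmv]
        exact hlim2.sup (hmv ▸ tendsto_pure_nhds m y₀)
      exact (ContinuousAt.continuousWithinAt hca)
    · have hUc : ContinuousAt U y₀ := (hU' y₀ hy₀).continuousAt
      have hcq : ContinuousWithinAt q (Icc (-L/2) (L/2)) y₀ :=
        (hq' y₀ hy₀).continuousAt.continuousWithinAt
      have hcU : ContinuousWithinAt U (Icc (-L/2) (L/2)) y₀ := hUc.continuousWithinAt
      have hratio : ContinuousWithinAt (fun y => q y / (κ * (U y - α)))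
          (Icc (-L/2) (L/2)) y₀ :=
        hcq.div (continuousWithinAt_const.mul (hcU.sub continuousWithinAt_const))
          (mul_ne_zero hκ.ne' (sub_ne_zero.mpr h))
      have hev : ∀ᶠ y in nhdsWithin y₀ (Icc (-L/2) (L/2)),
          m y = q y / (κ * (U y - α)) := by
        have h1 : ∀ᶠ y in nhdsWithin y₀ (Icc (-L/2) (L/2)), U y ≠ α :=
          (hUc.eventually_ne h).filter_mono nhdsWithin_le_nhds
        filter_upwards [h1] with y hy
        exact if_neg hy
      exact hratio.congr_of_eventuallyEq hev (if_neg h)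
  · intro y hy
    by_cases h : U y = α
    · rw [hnode y hy h, h]
      ring
    · have hmv : m y = q y / (κ * (U y - α)) := if_neg h
      rw [hmv]
      have hUa : U y - α ≠ 0 := sub_ne_zero.mpr h
      field_simp
  · intro y hy h
    have hq0 : q y = 0 := hnode y hy h
    have hU'0 : U' y ≠ 0 := hUnode y hy h
    have hmv : m y = q' y / (κ * U' y) := if_pos h
    refine ⟨hmv, ?_⟩
    rw [hmv]
    exact div_ne_zero (hsimple y hy hq0) (mul_ne_zero hκ.ne' hU'0)
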